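/- Let L > 0 and let ρ ∈ C²([0,L]) satisfy ρ(0) = ρ(L), ρ'(0) = ρ'(L), ∫₀^L ρ ds = νL, and μ ρ''(s) = c (β'(ρ(s)) − (1/L)∫₀^L β'(ρ(r)) dr) for all s, where μ > 0, c ≥ 0 are constants and β : ℝ → ℝ is C¹ and convex. Then ρ is constant (equal to ν). -/

import Mathlib

open Real Set MeasureTheory intervalIntegral

theorem stmt_4 (L ν μ c : ℝ) (hL : 0 < L) (hμ : 0 < μ) (hc : 0 ≤ c)
    (ρ ρ' ρ'' β β' : ℝ → ℝ)
    (hρ1 : ∀ s, HasDerivAt ρ (ρ' s) s)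
    (hρ2 : ∀ s, HasDerivAt ρ' (ρ'' s) s)
    (hρ''c : Continuous ρ'')
    (hβ1 : ∀ x, HasDerivAt β (β' x) x)
    (hβ'c : Continuous β')
    (hβconv : ConvexOn ℝ univ β)
    (hper0 : ρ 0 = ρ L) (hper1 : ρ' 0 = ρ' L)
    (hmass : (∫ s in (0:ℝ)..L, ρ s) = ν * L)
    (heq : ∀ s, μ * ρ'' s =
      c * (β' (ρ s) - (1 / L) * ∫ r in (0:ℝ)..L, β' (ρ r))) :
    ∀ s ∈ Icc 0 L, ρ s = ν := by
  have hρc : Continuous ρ := continuous_iff_continuousAt.2 fun x => (hρ1 x).continuousAt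
  have hρ'c : Continuous ρ' := continuous_iff_continuousAt.2 fun x => (hρ2 x).continuousAt
  set K : ℝ := (1 / L) * ∫ r in (0:ℝ)..L, β' (ρ r) with hK
  -- monotonicity of β'
  have hmono : ∀ x y : ℝ, x ≤ y → β' x ≤ β' y := by
    intro x y hxy
    rcases eq_or_lt_of_le hxy with rfl | h
    · exact le_rfl
    · calc β' x ≤ slope β x y :=
            hβconv.le_slope_of_hasDerivAt (mem_univ x) (mem_univ y) h (hβ1 x)
        _ ≤ β' y := hβconv.slope_le_of_hasDerivAt (mem_univ x) (mem_univ y) h (hβ1 y)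
  set F : ℝ → ℝ := fun s => (β' (ρ s) - β' ν) * (ρ s - ν) with hF
  have hFc : Continuous F := ((hβ'c.comp hρc).sub continuous_const).mul (hρc.sub continuous_const)
  have hFnn : ∀ s, 0 ≤ F s := by
    intro s
    simp only [hF]
    rcases le_total ν (ρ s) with h | h
    · exact mul_nonneg (sub_nonneg.2 (hmono _ _ h)) (sub_nonneg.2 h)
    · nlinarith [mul_nonneg (neg_nonneg.2 (sub_nonpos.2 (hmono _ _ h)))
        (neg_nonneg.2 (sub_nonpos.2 h))]
  have hzero : (∫ s in (0:ℝ)..L, (ρ s - ν)) = 0 := by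
    rw [intervalIntegral.integral_sub (hρc.intervalIntegrable _ _)
      (intervalIntegrable_const), hmass, intervalIntegral.integral_const]
    simp [mul_comm]
  -- integration by parts
  have hibp : (∫ s in (0:ℝ)..L, (ρ s - ν) * ρ'' s)
      = (ρ L - ν) * ρ' L - (ρ 0 - ν) * ρ' 0 - ∫ s in (0:ℝ)..L, ρ' s * ρ' s :=
    intervalIntegral.integral_mul_deriv_eq_deriv_mul
      (fun x _ => (hρ1 x).sub_const ν) (fun x _ => hρ2 x)
      (hρ'c.intervalIntegrable _ _) (hρ''c.intervalIntegrable _ _)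
  have hbd : (ρ L - ν) * ρ' L - (ρ 0 - ν) * ρ' 0 = 0 := by rw [hper0, hper1]; ring
  -- key identity
  have key : μ * ∫ s in (0:ℝ)..L, (ρ s - ν) * ρ'' s
      = c * ∫ s in (0:ℝ)..L, F s := by
    rw [← intervalIntegral.integral_const_mul]
    have h1 : (∫ s in (0:ℝ)..L, μ * ((ρ s - ν) * ρ'' s))
        = ∫ s in (0:ℝ)..L, (c * F s + (c * (β' ν - K)) * (ρ s - ν)) := by
      apply intervalIntegral.integral_congr
      intro s _
      simp only [hF]
      linear_combination (ρ s - ν) * heq s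
    rw [h1, intervalIntegral.integral_add (f := fun s => c * F s) (g := fun s => c * (β' ν - K) * (ρ s - ν))
        ((continuous_const.mul hFc).intervalIntegrable _ _)
        ((continuous_const.mul (hρc.sub continuous_const)).intervalIntegrable _ _),
      intervalIntegral.integral_const_mul, intervalIntegral.integral_const_mul, hzero]
    ring
  have hFint : 0 ≤ ∫ s in (0:ℝ)..L, F s :=
    intervalIntegral.integral_nonneg hL.le (fun s _ => hFnn s)
  have hGnn : ∀ s, 0 ≤ ρ' s * ρ' s := fun s => mul_self_nonneg _
  have hGint : (∫ s in (0:ℝ)..L, ρ' s * ρ' s) = 0 := by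
    have h1 : μ * ((ρ L - ν) * ρ' L - (ρ 0 - ν) * ρ' 0 - ∫ s in (0:ℝ)..L, ρ' s * ρ' s)
        = c * ∫ s in (0:ℝ)..L, F s := by rw [← hibp]; exact key
    have h2 : 0 ≤ c * ∫ s in (0:ℝ)..L, F s := mul_nonneg hc hFint
    have h3 : 0 ≤ ∫ s in (0:ℝ)..L, ρ' s * ρ' s :=
      intervalIntegral.integral_nonneg hL.le (fun s _ => hGnn s)
    nlinarith
  -- deduce ρ' = 0 on [0, L]
  have hae : ∀ᵐ x ∂(volume.restrict (Ioc (0:ℝ) L)), ρ' x * ρ' x = 0 := by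
    have hint : IntegrableOn (fun s => ρ' s * ρ' s) (Ioc (0:ℝ) L) volume :=
      ((hρ'c.mul hρ'c).integrableOn_Ioc)
    have := (MeasureTheory.setIntegral_eq_zero_iff_of_nonneg_ae
      (Filter.Eventually.of_forall fun s => hGnn s) hint).1 ?_
    · filter_upwards [this] with x hx using hx
    · rw [← intervalIntegral.integral_of_le hL.le]
      exact hGint
  have hU : {x | ρ' x * ρ' x ≠ 0} ∩ Ioo 0 L = ∅ := by
    apply IsOpen.eq_empty_of_measure_zero (μ := (volume : MeasureTheory.Measure ℝ))
      ((isOpen_ne.preimage (hρ'c.mul hρ'c)).inter isOpen_Ioo)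
    have h0 : volume.restrict (Ioc (0:ℝ) L) {x | ρ' x * ρ' x ≠ 0} = 0 := by
      rw [MeasureTheory.measure_eq_zero_iff_ae_notMem]
      filter_upwards [hae] with x hx
      simp [hx]
    rw [Measure.restrict_apply' measurableSet_Ioc] at h0
    exact measure_mono_null (inter_subset_inter_right _ Ioo_subset_Ioc_self) h0
  have hρ'Ioo : ∀ x ∈ Ioo (0:ℝ) L, ρ' x = 0 := by
    intro x hx
    by_contra h
    have : x ∈ {x | ρ' x * ρ' x ≠ 0} ∩ Ioo 0 L := ⟨mul_ne_zero h h, hx⟩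
    rw [hU] at this; exact this
  have hρ'Icc : ∀ x ∈ Icc (0:ℝ) L, ρ' x = 0 := by
    have heqc : EqOn ρ' (fun _ => (0:ℝ)) (closure (Ioo (0:ℝ) L)) :=
      Set.EqOn.closure (fun x hx => hρ'Ioo x hx) hρ'c continuous_const
    rw [closure_Ioo hL.ne] at heqc
    exact fun x hx => heqc hx
  -- ρ is constant on [0, L]
  have hconst : ∀ s ∈ Icc (0:ℝ) L, ρ s = ρ 0 := by
    intro s hs
    have h1 : (∫ t in (0:ℝ)..s, ρ' t) = ρ s - ρ 0 :=
      intervalIntegral.integral_eq_sub_of_hasDerivAt (fun t _ => hρ1 t)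
        (hρ'c.intervalIntegrable _ _)
    have h2 : (∫ t in (0:ℝ)..s, ρ' t) = 0 := by
      rw [intervalIntegral.integral_congr (g := fun _ => (0:ℝ)) ?_]
      · simp
      · intro t ht
        apply hρ'Icc
        have : uIcc (0:ℝ) s = Icc 0 s := uIcc_of_le hs.1
        rw [this] at ht
        exact ⟨ht.1, ht.2.trans hs.2⟩
    rw [h2] at h1; linarith
  intro s hs
  have h0 : ρ 0 = ν := by
    have h1 : (∫ t in (0:ℝ)..L, ρ t) = (L - 0) • ρ 0 := by
      rw [intervalIntegral.integral_congr (g := fun _ => ρ 0) ?_]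
      · exact intervalIntegral.integral_const _
      · intro t ht
        exact hconst t (by rwa [uIcc_of_le hL.le] at ht)
    rw [hmass, smul_eq_mul] at h1
    have h2 : L * ρ 0 = L * ν := by linarith
    exact mul_left_cancel₀ hL.ne' h2
  rw [hconst s hs, h0]
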